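/- Let d ∈ ℕ, let ‖·‖ be any norm on ℝ^d, let ε ∈ (0, ∞), ε₀ ∈ (0, ∞), and let A : ℝ^d → ℝ^d be any function satisfying ‖A(x) − x‖ ≤ ε for all x ∈ ℝ^d. Then there exists a point p ∈ ℝ^d such that the image of the closed ball {x : ‖x − p‖ ≤ ε₀/2} under A contains at least ⌈(1 + ε₀/(2ε))^d⌉ distinct values. -/

import Mathlib

set_option linter.unusedSectionVars false
set_option maxHeartbeats 1000000
open MeasureTheory Pointwise

section NormBasics
variable {d : ℕ} {N : (Fin d → ℝ) → ℝ}
  (hN0 : ∀ x, N x = 0 ↔ x = 0)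
  (hN1 : ∀ (a : ℝ) (x : Fin d → ℝ), N (a • x) = |a| * N x)
  (hN2 : ∀ x y : Fin d → ℝ, N (x + y) ≤ N x + N y)

include hN0 hN1 hN2

lemma rib_zero : N 0 = 0 := (hN0 0).mpr rfl

lemma rib_neg (x : Fin d → ℝ) : N (-x) = N x := by
  have := hN1 (-1) x
  simpa using this

lemma rib_nonneg (x : Fin d → ℝ) : 0 ≤ N x := by
  have h := hN2 x (-x)
  rw [add_neg_cancel, rib_zero hN0 hN1 hN2, rib_neg hN0 hN1 hN2] at h
  linarith

lemma rib_sum {ι : Type*} (s : Finset ι) (f : ι → (Fin d → ℝ)) :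
    N (∑ i ∈ s, f i) ≤ ∑ i ∈ s, N (f i) := by
  classical
  induction s using Finset.induction with
  | empty => simp [rib_zero hN0 hN1 hN2]
  | insert _ _ h ih =>
    rw [Finset.sum_insert h, Finset.sum_insert h]
    exact le_trans (hN2 _ _) (by linarith)

lemma rib_le_pinorm (x : Fin d → ℝ) :
    N x ≤ (∑ i, N (Pi.single i (1:ℝ))) * ‖x‖ := by
  classical
  have hx : x = ∑ i, Pi.single i (x i) := (Finset.univ_sum_single x).symm
  have h1 : N x ≤ ∑ i, N (Pi.single i (x i)) := by
    nth_rewrite 1 [hx]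
    exact rib_sum hN0 hN1 hN2 _ _
  have h2 : ∀ i, N (Pi.single i (x i)) ≤ N (Pi.single i (1:ℝ)) * ‖x‖ := by
    intro i
    have : Pi.single i (x i) = (x i) • (Pi.single i (1:ℝ) : Fin d → ℝ) := by
      ext j
      by_cases h : j = i <;> simp [Pi.single_apply, h, mul_comm]
    rw [this, hN1]
    have hxi : |x i| ≤ ‖x‖ := by
      simpa [Real.norm_eq_abs] using norm_le_pi_norm x i
    calc |x i| * N (Pi.single i 1) ≤ ‖x‖ * N (Pi.single i 1) :=
          mul_le_mul_of_nonneg_right hxi (rib_nonneg hN0 hN1 hN2 _)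
      _ = N (Pi.single i 1) * ‖x‖ := mul_comm _ _
  calc N x ≤ ∑ i, N (Pi.single i (x i)) := h1
    _ ≤ ∑ i, N (Pi.single i (1:ℝ)) * ‖x‖ := Finset.sum_le_sum (fun i _ => h2 i)
    _ = (∑ i, N (Pi.single i (1:ℝ))) * ‖x‖ := by rw [Finset.sum_mul]

lemma rib_continuous : Continuous N := by
  set C := (∑ i, N (Pi.single i (1:ℝ))) with hC
  have hC0 : 0 ≤ C := Finset.sum_nonneg fun i _ => rib_nonneg hN0 hN1 hN2 _
  have : LipschitzWith C.toNNReal N := by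
    apply LipschitzWith.of_dist_le_mul
    intro x y
    rw [Real.dist_eq, Real.coe_toNNReal _ hC0, dist_eq_norm]
    have h1 : N x - N y ≤ N (x - y) := by
      have := hN2 y (x - y); simp at this; linarith
    have h2 : N y - N x ≤ N (x - y) := by
      have := hN2 x (y - x)
      have hneg : N (y - x) = N (x - y) := by
        rw [← rib_neg hN0 hN1 hN2 (x - y)]; congr 1; abel
      simp at this; linarith
    have := rib_le_pinorm hN0 hN1 hN2 (x - y)
    rw [abs_le]; constructor <;> linarith
  exact this.continuous

lemma rib_lower (hd : 0 < d) : ∃ c > 0, ∀ x, c * ‖x‖ ≤ N x := by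
  have hne : (Metric.sphere (0 : Fin d → ℝ) 1).Nonempty := by
    refine ⟨Pi.single ⟨0, hd⟩ 1, ?_⟩
    simp only [Metric.mem_sphere, dist_zero_right]
    have : ‖(Pi.single (⟨0, hd⟩ : Fin d) (1:ℝ) : Fin d → ℝ)‖ = ‖(1:ℝ)‖ := Pi.norm_single _
    simpa using this
  obtain ⟨x₀, hx₀, hmin⟩ := (isCompact_sphere (0 : Fin d → ℝ) 1).exists_isMinOn hne
    (rib_continuous hN0 hN1 hN2).continuousOn
  have hx₀n : ‖x₀‖ = 1 := by simpa [dist_zero_right] using hx₀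
  have hx₀0 : x₀ ≠ 0 := by intro h; rw [h] at hx₀n; simp at hx₀n
  have hc : 0 < N x₀ := by
    rcases lt_or_eq_of_le (rib_nonneg hN0 hN1 hN2 x₀) with h | h
    · exact h
    · exact absurd ((hN0 x₀).mp h.symm) hx₀0
  refine ⟨N x₀, hc, fun x => ?_⟩
  rcases eq_or_ne x 0 with rfl | hx
  · simp [rib_zero hN0 hN1 hN2]
  · have hxn : 0 < ‖x‖ := norm_pos_iff.mpr hx
    set u := ‖x‖⁻¹ • x with hu
    have hus : u ∈ Metric.sphere (0 : Fin d → ℝ) 1 := by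
      simp only [Metric.mem_sphere, dist_zero_right, hu, norm_smul, norm_inv, norm_norm]
      field_simp
    have h1 : N x₀ ≤ N u := hmin hus
    have h2 : N x = ‖x‖ * N u := by
      have hx2 : x = ‖x‖ • u := by rw [hu, smul_smul]; field_simp; simp
      conv_lhs => rw [hx2]
      rw [hN1, abs_of_pos hxn]
    rw [h2]
    calc N x₀ * ‖x‖ = ‖x‖ * N x₀ := mul_comm _ _
      _ ≤ ‖x‖ * N u := by nlinarith
end NormBasics


section MeasureBasics
variable {d : ℕ}

/-- half-open cube -/
def rib_cube (p : Fin d → ℝ) (u : ℝ) : Set (Fin d → ℝ) :=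
  Set.univ.pi fun i => Set.Ico (p i) (p i + u)

lemma rib_cube_meas (p : Fin d → ℝ) (u : ℝ) : MeasurableSet (rib_cube p u) :=
  MeasurableSet.univ_pi fun i => measurableSet_Ico

lemma rib_cube_vol (p : Fin d → ℝ) {u : ℝ} (hu : 0 ≤ u) :
    volume (rib_cube p u) = ENNReal.ofReal (u ^ d) := by
  rw [rib_cube, volume_pi_pi]
  simp only [Real.volume_Ico, add_sub_cancel_left]
  rw [Finset.prod_const, Finset.card_univ, Fintype.card_fin, ← ENNReal.ofReal_pow hu]

lemma rib_mem_cube {p z : Fin d → ℝ} {u : ℝ} :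
    z ∈ rib_cube p u ↔ ∀ i, p i ≤ z i ∧ z i < p i + u := by
  simp [rib_cube, Set.mem_pi]

variable {N : (Fin d → ℝ) → ℝ}

lemma rib_ball_vol
    (hN1 : ∀ (a : ℝ) (x : Fin d → ℝ), N (a • x) = |a| * N x)
    {u : ℝ} (hu : 0 < u) :
    volume {x | N x ≤ u} = ENNReal.ofReal (u ^ d) * volume {x | N x ≤ 1} := by
  have hset : {x : Fin d → ℝ | N x ≤ u} = u • {x : Fin d → ℝ | N x ≤ 1} := by
    ext x
    rw [Set.mem_smul_set_iff_inv_smul_mem₀ (ne_of_gt hu)]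
    simp only [Set.mem_setOf_eq]
    rw [hN1, abs_of_pos (inv_pos.mpr hu)]
    rw [inv_mul_le_iff₀ hu, mul_one]
  rw [hset, Measure.addHaar_smul, Module.finrank_fin_fun]
  congr 1
  rw [abs_of_nonneg (pow_nonneg hu.le d)]

lemma rib_ball_pos {C : ℝ} (hC : 0 < C) (hle : ∀ x, N x ≤ C * ‖x‖) :
    0 < volume {x | N x ≤ 1} := by
  have hsub : rib_cube (fun _ => 0) C⁻¹ ⊆ {x | N x ≤ 1} := by
    intro x hx
    rw [rib_mem_cube] at hx
    simp only [Set.mem_setOf_eq]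
    have hn : ‖x‖ ≤ C⁻¹ := by
      rw [pi_norm_le_iff_of_nonneg (by positivity)]
      intro i
      have := hx i
      rw [Real.norm_eq_abs, abs_le]
      constructor <;> [linarith [this.1]; linarith [this.2]]
    calc N x ≤ C * ‖x‖ := hle x
      _ ≤ C * C⁻¹ := by nlinarith
      _ = 1 := mul_inv_cancel₀ (ne_of_gt hC)
  calc (0:ENNReal) < ENNReal.ofReal (C⁻¹ ^ d) := by
        rw [ENNReal.ofReal_pos]; positivity
    _ = volume (rib_cube (fun _ => 0) C⁻¹) := (rib_cube_vol _ (by positivity)).symm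
    _ ≤ volume {x | N x ≤ 1} := measure_mono hsub

lemma rib_ball_lt_top {c : ℝ} (hc : 0 < c) (hlow : ∀ x, c * ‖x‖ ≤ N x) :
    volume {x : Fin d → ℝ | N x ≤ 1} < ⊤ := by
  have hsub : {x : Fin d → ℝ | N x ≤ 1} ⊆ Set.univ.pi fun _ => Set.Icc (-c⁻¹) c⁻¹ := by
    intro x hx
    simp only [Set.mem_setOf_eq] at hx
    rw [Set.mem_pi]
    intro i _
    have h1 : c * ‖x‖ ≤ 1 := le_trans (hlow x) hx
    have h2 : |x i| ≤ ‖x‖ := by simpa [Real.norm_eq_abs] using norm_le_pi_norm x i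
    have h4 : c * |x i| ≤ 1 := le_trans (mul_le_mul_of_nonneg_left h2 hc.le) h1
    have h3 : |x i| ≤ c⁻¹ := by rw [← one_div, le_div_iff₀ hc]; linarith
    rw [Set.mem_Icc, ← abs_le]
    exact h3
  calc volume {x : Fin d → ℝ | N x ≤ 1}
      ≤ volume (Set.univ.pi fun _ : Fin d => Set.Icc (-c⁻¹) c⁻¹) := measure_mono hsub
    _ = ∏ _i : Fin d, ENNReal.ofReal (c⁻¹ - (-c⁻¹)) := by
        rw [volume_pi_pi]; simp [Real.volume_Icc]
    _ < ⊤ := by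
        rw [Finset.prod_const]
        exact ENNReal.pow_lt_top ENNReal.ofReal_lt_top
end MeasureBasics

/-- If `A : ℝ^d → ℝ^d` (with `ℝ^d` modeled as `Fin d → ℝ` and an arbitrary norm `N`) moves no
point by more than `ε`, then there is a point `p` such that the image under `A` of the closed
`N`-ball of radius `ε₀/2` around `p` contains at least `⌈(1 + ε₀/(2ε))^d⌉` distinct values. -/
theorem rounding_image_lower_bound
    (d : ℕ) (hd : 0 < d)
    (N : (Fin d → ℝ) → ℝ)
    (hN0 : ∀ x, N x = 0 ↔ x = 0)
    (hN1 : ∀ (a : ℝ) (x : Fin d → ℝ), N (a • x) = |a| * N x)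
    (hN2 : ∀ x y : Fin d → ℝ, N (x + y) ≤ N x + N y)
    (ε ε₀ : ℝ) (hε : 0 < ε) (hε₀ : 0 < ε₀)
    (A : (Fin d → ℝ) → (Fin d → ℝ)) (hA : ∀ x, N (A x - x) ≤ ε) :
    ∃ p : Fin d → ℝ, ∃ 𝒮 : Finset (Fin d → ℝ),
      (↑𝒮 : Set (Fin d → ℝ)) ⊆ A '' {x : Fin d → ℝ | N (x - p) ≤ ε₀ / 2} ∧
      ⌈(1 + ε₀ / (2 * ε)) ^ d⌉₊ ≤ 𝒮.card := by
  classical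
  by_contra hcon
  push_neg at hcon
  -- basic quantities
  set ρ : ℝ := ε₀ / (2 * ε) with hρdef
  have hρ : 0 < ρ := by positivity
  set r : ℝ := ε₀ / 2 with hrdef
  have hr : 0 < r := by positivity
  have hρr : ρ * ε = r := by rw [hρdef, hrdef]; field_simp
  set M : ℕ := ⌈(1 + ρ) ^ d⌉₊ with hMdef
  have hy1 : (1:ℝ) < (1 + ρ) ^ d := one_lt_pow₀ (by linarith) hd.ne'
  have hM2 : 2 ≤ M := by
    have : 1 < M := by
      rw [hMdef, Nat.lt_ceil]; exact_mod_cast hy1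
    omega
  set m : ℕ := M - 1 with hmdef
  have hm1 : 1 ≤ m := by omega
  have hcard : ∀ (p : Fin d → ℝ) (S : Finset (Fin d → ℝ)),
      (↑S : Set (Fin d → ℝ)) ⊆ A '' {x | N (x - p) ≤ r} → S.card ≤ m := by
    intro p S hS
    have := hcon p S hS
    omega
  have hmy : (m:ℝ) < (1 + ρ) ^ d := by
    have h1 : (M:ℝ) < (1+ρ)^d + 1 := Nat.ceil_lt_add_one (by positivity)
    have h2 : (m:ℝ) = (M:ℝ) - 1 := by
      rw [hmdef, Nat.cast_sub (by omega)]; norm_num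
    linarith
  -- norm comparison constants
  set C : ℝ := ∑ i, N (Pi.single i (1:ℝ)) with hCdef
  have hNle : ∀ x, N x ≤ C * ‖x‖ := rib_le_pinorm hN0 hN1 hN2
  have hC : 0 < C := by
    by_contra hCn
    push_neg at hCn
    set x₁ : Fin d → ℝ := Pi.single ⟨0, hd⟩ (1:ℝ) with hx₁
    have h1 : N x₁ ≤ C * ‖x₁‖ := hNle x₁
    have h2 : C * ‖x₁‖ ≤ 0 := mul_nonpos_of_nonpos_of_nonneg hCn (norm_nonneg _)
    have h0 : N x₁ = 0 := le_antisymm (le_trans h1 h2) (rib_nonneg hN0 hN1 hN2 x₁)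
    have := (hN0 x₁).mp h0
    have := congrFun this ⟨0, hd⟩
    simp [hx₁] at this
  obtain ⟨c, hc, hNge⟩ := rib_lower hN0 hN1 hN2 hd
  -- choose parameters
  set β : ℝ := (m:ℝ) ^ ((d:ℝ)⁻¹) with hβdef
  have hdR : (d:ℝ) ≠ 0 := by exact_mod_cast hd.ne'
  have hβ1 : 1 ≤ β := by
    rw [hβdef]
    calc (1:ℝ) = 1 ^ ((d:ℝ)⁻¹) := (Real.one_rpow _).symm
      _ ≤ (m:ℝ) ^ ((d:ℝ)⁻¹) :=
        Real.rpow_le_rpow zero_le_one (by exact_mod_cast hm1) (by positivity)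
  have hβd : β ^ d = (m:ℝ) := by
    rw [hβdef, ← Real.rpow_natCast ((m:ℝ) ^ ((d:ℝ)⁻¹)) d, ← Real.rpow_mul (Nat.cast_nonneg m),
      inv_mul_cancel₀ hdR, Real.rpow_one]
  have hβρ : β < 1 + ρ := by
    by_contra hcon2
    push_neg at hcon2
    have : (1+ρ)^d ≤ β^d := pow_le_pow_left₀ (by linarith) hcon2 d
    rw [hβd] at this; linarith
  set t : ℝ := (ρ + β - 1)/2 with htdef
  have ht : 0 < t := by rw [htdef]; linarith
  have htρ : t < ρ := by rw [htdef]; linarith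
  have hβt : β < 1 + t := by rw [htdef]; linarith
  have htεr : t * ε < r := by
    calc t * ε < ρ * ε := by nlinarith
    _ = r := hρr
  set δ : ℝ := (r - t*ε) / (2 * C * (1+t)) with hδdef
  have hδ : 0 < δ := by rw [hδdef]; apply div_pos (by linarith); positivity
  set s : ℝ := (1+t) * δ with hsdef
  have hs : 0 < s := by rw [hsdef]; positivity
  have hCs : t*ε + C*s = (r + t*ε)/2 := by
    rw [hsdef, hδdef]; field_simp; ring
  have hkey : t*ε + C*s ≤ r := by rw [hCs]; linarith
  set a : ℝ := C * δ with hadef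
  set b : ℝ := t*ε + C*s with hbdef
  have hb : 0 < b := by rw [hbdef]; positivity
  have ha : 0 < a := by rw [hadef]; positivity
  have hg : 0 < (1+t) - β := by linarith
  set Q : ℝ := ((1+t)*a + β*b)/((1+t) - β) with hQdef
  have hQ : 0 ≤ Q := by rw [hQdef]; positivity
  have hQg : Q * ((1+t)-β) = (1+t)*a + β*b := div_mul_cancel₀ _ (ne_of_gt hg)
  set R : ℝ := Q + a + 1 with hRdef
  clear_value ρ r M m C β t δ s a b Q R
  have hRa : 0 < R - a := by rw [hRdef]; linarith
  have hRmain : β * (R + b) < (1+t) * (R - a) := by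
    rw [hRdef]
    have e1 : (1+t)*(Q+a+1-a) = Q*((1+t)-β) + β*Q + (1+t) := by ring
    have e2 : β*(Q+a+1+b) = β*Q + β*b + β*(a+1) := by ring
    have e3 : β*(a+1) < (1+t)*(a+1) :=
      mul_lt_mul_of_pos_right hβt (by linarith)
    rw [e1, e2, hQg]
    linarith
  -- the grid
  set g : (Fin d → ℤ) → (Fin d → ℝ) := fun k i => δ * (k i : ℝ) with hgdef
  have hDfin : {k : Fin d → ℤ | N (g k) ≤ R}.Finite := by
    set B : ℤ := ⌈R / (c * δ)⌉ with hBdef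
    apply Set.Finite.subset (Set.finite_Icc (fun _ : Fin d => -B) (fun _ => B))
    intro k hk
    simp only [Set.mem_setOf_eq] at hk
    rw [Set.mem_Icc]
    have hnk : c * ‖g k‖ ≤ R := le_trans (hNge _) hk
    have habs : ∀ i, |(k i : ℝ)| ≤ (B:ℝ) := by
      intro i
      have h2 : δ * |(k i:ℝ)| ≤ ‖g k‖ := by
        simpa [hgdef, Real.norm_eq_abs, abs_mul, abs_of_pos hδ] using norm_le_pi_norm (g k) i
      have h3' : c * (δ * |(k i:ℝ)|) ≤ R := le_trans (mul_le_mul_of_nonneg_left h2 hc.le) hnk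
      have h3 : ((|k i| : ℤ):ℝ) ≤ R / (c * δ) := by
        rw [Int.cast_abs, le_div_iff₀ (by positivity)]
        linarith
      have h4 : ((|k i| : ℤ):ℝ) ≤ (B:ℝ) :=
        le_trans h3 (by rw [hBdef]; exact Int.le_ceil _)
      simpa [Int.cast_abs] using h4
    constructor
    · intro i
      have := habs i
      rw [abs_le] at this
      exact_mod_cast this.1
    · intro i
      have := habs i
      rw [abs_le] at this
      exact_mod_cast this.2
  set D : Finset (Fin d → ℤ) := hDfin.toFinset with hDdef
  have hDmem : ∀ k, k ∈ D ↔ N (g k) ≤ R := fun k => by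
    rw [hDdef, Set.Finite.mem_toFinset]; rfl
  -- the dilation map
  set Φ : (Fin d → ℤ) → (Fin d → ℝ) := fun k => g k + t • (g k - A (g k)) with hΦdef
  have hΦc : ∀ k i, Φ k i = (1+t) * (δ * (k i:ℝ)) - t * A (g k) i := by
    intro k i
    simp only [hΦdef, Pi.add_apply, Pi.smul_apply, Pi.sub_apply, smul_eq_mul, hgdef]
    ring
  have hΦg : ∀ k, N (g k - Φ k) ≤ t * ε := by
    intro k
    have hh : g k - Φ k = t • (A (g k) - g k) := by
      rw [hΦdef]; ext i
      simp only [Pi.sub_apply, Pi.add_apply, Pi.smul_apply, smul_eq_mul]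
      ring
    rw [hh, hN1, abs_of_pos ht]
    exact mul_le_mul_of_nonneg_left (hA _) ht.le
  have hΦball : ∀ k z, z ∈ rib_cube (Φ k) s →
      N (z - Φ k) ≤ C * s ∧ N (Φ k - z) ≤ C * s := by
    intro k z hz
    rw [rib_mem_cube] at hz
    have h1 : ‖z - Φ k‖ ≤ s := by
      rw [pi_norm_le_iff_of_nonneg hs.le]
      intro i
      have := hz i
      rw [Pi.sub_apply, Real.norm_eq_abs, abs_le]
      constructor <;> linarith [this.1, this.2]
    have h2 : N (z - Φ k) ≤ C*s := le_trans (hNle _) (mul_le_mul_of_nonneg_left h1 hC.le)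
    refine ⟨h2, ?_⟩
    rw [← neg_sub z (Φ k), rib_neg hN0 hN1 hN2]
    exact h2
  -- multiplicity bound
  have hmult : ∀ y : Fin d → ℝ,
      (D.filter (fun k => y ∈ rib_cube (Φ k) s)).card ≤ m := by
    intro y
    set F := D.filter (fun k => y ∈ rib_cube (Φ k) s) with hFdef
    have hFmem : ∀ k ∈ F, y ∈ rib_cube (Φ k) s := by
      intro k hk
      exact (Finset.mem_filter.mp hk).2
    have hinj : Set.InjOn (fun k => A (g k)) ↑F := by
      intro k hk k' hk' hAkk
      simp only [Set.mem_setOf_eq] at hAkk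
      have hky := hFmem k (by exact_mod_cast hk)
      have hk'y := hFmem k' (by exact_mod_cast hk')
      rw [rib_mem_cube] at hky hk'y
      funext i
      have e1 := hky i
      have e2 := hk'y i
      have hΦi : Φ k i - Φ k' i = (1+t) * δ * ((k i : ℝ) - (k' i : ℝ)) := by
        rw [hΦc, hΦc, hAkk]; ring
      have hsd : (0:ℝ) < (1+t) * δ := by positivity
      have hub : (1+t)*δ*((k i:ℝ) - (k' i:ℝ)) < (1+t)*δ*1 := by
        rw [mul_one, ← hΦi]
        have : s = (1+t)*δ := hsdef
        linarith [e1.1, e1.2, e2.1, e2.2]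
      have hlb : (1+t)*δ*(-1) < (1+t)*δ*((k i:ℝ) - (k' i:ℝ)) := by
        rw [← hΦi]
        have : s = (1+t)*δ := hsdef
        linarith [e1.1, e1.2, e2.1, e2.2]
      have h1 : ((k i:ℝ) - (k' i:ℝ)) < 1 := by
        have := (mul_lt_mul_iff_right₀ hsd).mp hub
        linarith
      have h2 : (-1:ℝ) < ((k i:ℝ) - (k' i:ℝ)) := by
        have := (mul_lt_mul_iff_right₀ hsd).mp hlb
        linarith
      have : |((k i - k' i : ℤ) : ℝ)| < 1 := by
        push_cast
        rw [abs_lt]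
        constructor <;> linarith
      have hz : |k i - k' i| < 1 := by exact_mod_cast (by rwa [← Int.cast_abs] at this :
        ((|k i - k' i| : ℤ) : ℝ) < 1)
      have h8 := abs_lt.mp hz
      omega
    have hsub : ↑(F.image (fun k => A (g k))) ⊆ A '' {x | N (x - y) ≤ r} := by
      intro v hv
      simp only [Finset.coe_image, Set.mem_image, Finset.mem_coe] at hv
      obtain ⟨k, hkF, rfl⟩ := hv
      refine ⟨g k, ?_, rfl⟩
      simp only [Set.mem_setOf_eq]
      have hk2 : y ∈ rib_cube (Φ k) s := hFmem k hkF
      have h1 : N (Φ k - y) ≤ C * s := (hΦball k y hk2).2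
      have h2 : N (g k - Φ k) ≤ t * ε := hΦg k
      have h3 : N (g k - y) ≤ N (g k - Φ k) + N (Φ k - y) := by
        have := hN2 (g k - Φ k) (Φ k - y)
        rwa [sub_add_sub_cancel] at this
      linarith
    have := hcard y (F.image (fun k => A (g k))) hsub
    rwa [Finset.card_image_of_injOn hinj] at this
  -- step A : lower bound on grid count
  have hstepA : volume {x : Fin d → ℝ | N x ≤ R - C*δ}
      ≤ (D.card : ENNReal) * ENNReal.ofReal (δ^d) := by
    have hcover : {x : Fin d → ℝ | N x ≤ R - C*δ} ⊆ ⋃ k ∈ D, rib_cube (g k) δ := by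
      intro x hx
      simp only [Set.mem_setOf_eq] at hx
      set k : Fin d → ℤ := fun i => ⌊x i / δ⌋ with hkdef
      have hfl : ∀ i, g k i ≤ x i ∧ x i < g k i + δ := by
        intro i
        have h1 : ((⌊x i / δ⌋ : ℤ):ℝ) ≤ x i / δ := Int.floor_le _
        have h2 : x i / δ < (⌊x i / δ⌋:ℝ) + 1 := Int.lt_floor_add_one _
        have hgk : g k i = δ * (⌊x i / δ⌋:ℝ) := rfl
        constructor
        · rw [hgk]
          calc δ * (⌊x i / δ⌋:ℝ) ≤ δ * (x i / δ) := by nlinarith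
            _ = x i := by field_simp
        · rw [hgk]
          have : x i = δ * (x i / δ) := by field_simp
          nlinarith
      have hmemc : x ∈ rib_cube (g k) δ := by
        rw [rib_mem_cube]; exact hfl
      have hkD : k ∈ D := by
        rw [hDmem]
        have h3 : N (g k - x) ≤ C * δ := by
          apply le_trans (hNle _)
          apply mul_le_mul_of_nonneg_left _ hC.le
          rw [pi_norm_le_iff_of_nonneg hδ.le]
          intro i
          have := hfl i
          rw [Pi.sub_apply, Real.norm_eq_abs, abs_le]
          constructor <;> linarith [this.1, this.2]
        have h4 : N (g k) ≤ N x + N (g k - x) := by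
          have := hN2 x (g k - x)
          rwa [add_sub_cancel] at this
        linarith
      exact Set.mem_biUnion hkD hmemc
    calc volume {x : Fin d → ℝ | N x ≤ R - C*δ}
        ≤ volume (⋃ k ∈ D, rib_cube (g k) δ) := measure_mono hcover
      _ ≤ ∑ k ∈ D, volume (rib_cube (g k) δ) := measure_biUnion_finset_le D _
      _ = ∑ _k ∈ D, ENNReal.ofReal (δ^d) :=
          Finset.sum_congr rfl fun k _ => rib_cube_vol _ hδ.le
      _ = (D.card : ENNReal) * ENNReal.ofReal (δ^d) := by
          rw [Finset.sum_const, nsmul_eq_mul]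
  -- step C : upper bound via multiplicity
  set R' : ℝ := R + b with hR'def
  have hR' : 0 < R' := by rw [hR'def]; nlinarith [hRa, ha]
  have hNcont : Continuous N := rib_continuous hN0 hN1 hN2
  have hBbmeas : MeasurableSet {x : Fin d → ℝ | N x ≤ R'} :=
    (isClosed_Iic.preimage hNcont).measurableSet
  have hcubesub : ∀ k ∈ D, rib_cube (Φ k) s ⊆ {x : Fin d → ℝ | N x ≤ R'} := by
    intro k hk z hz
    have h1 : N (z - Φ k) ≤ C*s := (hΦball k z hz).1
    have h2 : N (Φ k - g k) ≤ t*ε := by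
      rw [← neg_sub (g k) (Φ k), rib_neg hN0 hN1 hN2]
      exact hΦg k
    have h3 : N (g k) ≤ R := (hDmem k).mp hk
    have h4 : N (Φ k) ≤ N (g k) + N (Φ k - g k) := by
      have := hN2 (g k) (Φ k - g k)
      rwa [add_sub_cancel] at this
    have h5 : N z ≤ N (Φ k) + N (z - Φ k) := by
      have := hN2 (Φ k) (z - Φ k)
      rwa [add_sub_cancel] at this
    simp only [Set.mem_setOf_eq]
    rw [hR'def, hbdef]
    linarith
  have hstepC : (D.card : ENNReal) * ENNReal.ofReal (s^d)
      ≤ (m : ENNReal) * volume {x : Fin d → ℝ | N x ≤ R'} := by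
    have hmeas : ∀ k ∈ D,
        Measurable fun y => (rib_cube (Φ k) s).indicator (fun _ => (1:ENNReal)) y :=
      fun k _ => measurable_const.indicator (rib_cube_meas _ _)
    calc (D.card : ENNReal) * ENNReal.ofReal (s^d)
        = ∑ _k ∈ D, ENNReal.ofReal (s^d) := by rw [Finset.sum_const, nsmul_eq_mul]
      _ = ∑ k ∈ D, volume (rib_cube (Φ k) s) :=
          Finset.sum_congr rfl fun k _ => (rib_cube_vol _ hs.le).symm
      _ = ∑ k ∈ D, ∫⁻ y, (rib_cube (Φ k) s).indicator (fun _ => (1:ENNReal)) y :=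
          Finset.sum_congr rfl fun k _ =>
            (lintegral_indicator_one (rib_cube_meas _ _)).symm
      _ = ∫⁻ y, ∑ k ∈ D, (rib_cube (Φ k) s).indicator (fun _ => (1:ENNReal)) y :=
          (lintegral_finset_sum D hmeas).symm
      _ ≤ ∫⁻ y, ({x : Fin d → ℝ | N x ≤ R'}).indicator (fun _ => (m:ENNReal)) y := by
          apply lintegral_mono
          intro y
          dsimp only
          by_cases hy : y ∈ {x : Fin d → ℝ | N x ≤ R'}
          · rw [Set.indicator_of_mem hy]
            have hsum : ∑ k ∈ D, (rib_cube (Φ k) s).indicator (fun _ => (1:ENNReal)) y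
                = ((D.filter (fun k => y ∈ rib_cube (Φ k) s)).card : ENNReal) := by
              rw [Finset.card_filter, Nat.cast_sum]
              apply Finset.sum_congr rfl
              intro k _
              rw [Set.indicator_apply]
              split_ifs <;> simp
            rw [hsum]
            exact_mod_cast Nat.cast_le.mpr (hmult y)
          · rw [Set.indicator_of_notMem hy]
            rw [Finset.sum_eq_zero]
            intro k hk
            exact Set.indicator_of_notMem (fun hmem => hy (hcubesub k hk hmem)) _
      _ = (m:ENNReal) * volume {x : Fin d → ℝ | N x ≤ R'} :=
          lintegral_indicator_const hBbmeas _
  -- assemble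
  have hRCδ : 0 < R - C*δ := by rw [← hadef]; exact hRa
  set V₁ := volume {x : Fin d → ℝ | N x ≤ 1} with hV₁def
  have hV₁pos : 0 < V₁ := rib_ball_pos hC hNle
  have hV₁top : V₁ < ⊤ := rib_ball_lt_top hc hNge
  have hvol1 : volume {x : Fin d → ℝ | N x ≤ R - C*δ}
      = ENNReal.ofReal ((R-C*δ)^d) * V₁ := rib_ball_vol hN1 hRCδ
  have hvol2 : volume {x : Fin d → ℝ | N x ≤ R'}
      = ENNReal.ofReal (R'^d) * V₁ := rib_ball_vol hN1 hR'
  have hchain : ENNReal.ofReal ((R-C*δ)^d * (1+t)^d) * V₁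
      ≤ ENNReal.ofReal ((m:ℝ) * R'^d) * V₁ := by
    calc ENNReal.ofReal ((R-C*δ)^d * (1+t)^d) * V₁
        = ENNReal.ofReal ((R-C*δ)^d) * V₁ * ENNReal.ofReal ((1+t)^d) := by
          rw [ENNReal.ofReal_mul (by positivity)]; ring
      _ = volume {x : Fin d → ℝ | N x ≤ R - C*δ} * ENNReal.ofReal ((1+t)^d) := by
          rw [hvol1]
      _ ≤ (D.card : ENNReal) * ENNReal.ofReal (δ^d) * ENNReal.ofReal ((1+t)^d) :=
          mul_le_mul_left hstepA _
      _ = (D.card : ENNReal) * ENNReal.ofReal (s^d) := by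
          rw [mul_assoc, ← ENNReal.ofReal_mul (by positivity)]
          congr 2
          rw [hsdef, mul_pow]
          ring
      _ ≤ (m : ENNReal) * volume {x : Fin d → ℝ | N x ≤ R'} := hstepC
      _ = ENNReal.ofReal ((m:ℝ) * R'^d) * V₁ := by
          rw [hvol2, ENNReal.ofReal_mul (by positivity), ENNReal.ofReal_natCast]
          ring
  have h3 : ENNReal.ofReal ((R-C*δ)^d * (1+t)^d) ≤ ENNReal.ofReal ((m:ℝ) * R'^d) :=
    (ENNReal.mul_le_mul_iff_left (ne_of_gt hV₁pos) hV₁top.ne).mp hchain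
  have h4 : (R-C*δ)^d * (1+t)^d ≤ (m:ℝ) * R'^d :=
    (ENNReal.ofReal_le_ofReal_iff (by positivity)).mp h3
  have h5 : (m:ℝ) * R'^d = (β * (R + b))^d := by
    rw [mul_pow, hβd, hR'def]
  have h6 : (β*(R+b))^d < ((1+t)*(R-a))^d :=
    pow_lt_pow_left₀ hRmain (by positivity) hd.ne'
  rw [h5] at h4
  rw [mul_pow] at h4
  rw [mul_pow, mul_pow] at h6
  rw [hadef] at h6
  linarith
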